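/- (Canonical top-exterior-power isomorphism for a short exact sequence.) Let 0 → V₁ →ⁱ V₂ →ᵖ V₃ → 0 be a short exact sequence of finite-dimensional real vector spaces, and set k = dim V₁ and r = dim V₃. Then there exists a linear equivalence e : (⋀ᵏ V₁) ⊗ (⋀ʳ V₃) ≅ ⋀^{k+r} V₂ such that e(ω ⊗ (⋀ʳ p)(σ)) = (⋀ᵏ i)(ω) ∧ σ for all ω ∈ ⋀ᵏ V₁ and σ ∈ ⋀ʳ V₂. In particular ⋀^{top} V₁ ⊗ ⋀^{top} V₃ is canonically isomorphic to ⋀^{top} V₂. -/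

import Mathlib

open TensorProduct

section AuxExteriorTop

open ExteriorAlgebra

variable {M N : Type*} [AddCommGroup M] [Module ℝ M] [AddCommGroup N] [Module ℝ N]

/-- Expansion of an alternating map in a basis. -/
lemma aux_alt_expand {m : ℕ} (b : Module.Basis (Fin m) ℝ M) {n : ℕ}
    (A : M [⋀^Fin n]→ₗ[ℝ] N) (v : Fin n → M) :
    A v = ∑ f : Fin n → Fin m, (∏ j, b.repr (v j) (f j)) • A (b ∘ f) := by
  classical
  have hv : v = fun j => ∑ i : Fin m, b.repr (v j) i • b i :=
    funext fun j => (b.sum_repr (v j)).symm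
  have h1 : A v = A.toMultilinearMap (fun j => ∑ i : Fin m, b.repr (v j) i • b i) := by
    rw [← hv]; rfl
  rw [h1, MultilinearMap.map_sum]
  refine Finset.sum_congr rfl fun f _ => ?_
  exact A.toMultilinearMap.map_smul_univ (fun j => b.repr (v j) (f j)) (b ∘ f)

lemma aux_ιMulti_eq_zero {m n : ℕ} (b : Module.Basis (Fin m) ℝ M) (h : m < n) (v : Fin n → M) :
    ιMulti ℝ n v = 0 := by
  classical
  rw [aux_alt_expand b (ιMulti ℝ n) v]
  refine Finset.sum_eq_zero fun f _ => ?_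
  obtain ⟨j, j', hne, heq⟩ := Fintype.exists_ne_map_eq_of_card_lt f (by simpa using h)
  rw [AlternatingMap.map_eq_zero_of_eq (ιMulti ℝ n) (b ∘ f)
    (by simp [Function.comp, heq]) hne, smul_zero]

lemma aux_exteriorPower_eq_bot {m n : ℕ} (b : Module.Basis (Fin m) ℝ M) (h : m < n) :
    (⋀[ℝ]^n M : Submodule ℝ (ExteriorAlgebra ℝ M)) = ⊥ := by
  rw [← ExteriorAlgebra.ιMulti_span_fixedDegree]
  refine le_bot_iff.mp (Submodule.span_le.2 ?_)
  rintro x ⟨v, rfl⟩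
  simp [aux_ιMulti_eq_zero b h v]

lemma aux_top_mem_span {m : ℕ} (b : Module.Basis (Fin m) ℝ M) (v : Fin m → M) :
    ιMulti ℝ m v ∈ Submodule.span ℝ {ιMulti ℝ m (⇑b)} := by
  classical
  rw [aux_alt_expand b (ιMulti ℝ m) v]
  refine Submodule.sum_mem _ fun f _ => ?_
  by_cases hf : Function.Injective f
  · have hb : Function.Bijective f := Finite.injective_iff_bijective.mp hf
    have : b ∘ f = ⇑b ∘ (Equiv.ofBijective f hb) := rfl
    rw [this, AlternatingMap.map_perm]
    exact Submodule.smul_mem _ _ (Submodule.smul_mem _ _ (Submodule.mem_span_singleton_self _))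
  · have h0 : ιMulti ℝ m (⇑b ∘ f) = 0 :=
      AlternatingMap.map_eq_zero_of_not_injective _ _
        (fun hinj => hf (Function.Injective.of_comp hinj))
    rw [h0, smul_zero]
    exact Submodule.zero_mem _

lemma aux_top_span {m : ℕ} (b : Module.Basis (Fin m) ℝ M) :
    (⋀[ℝ]^m M : Submodule ℝ (ExteriorAlgebra ℝ M)) = Submodule.span ℝ {ιMulti ℝ m (⇑b)} := by
  refine le_antisymm ?_ ?_
  · rw [← ExteriorAlgebra.ιMulti_span_fixedDegree]
    refine Submodule.span_le.2 ?_
    rintro x ⟨v, rfl⟩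
    exact aux_top_mem_span b v
  · rw [Submodule.span_le, Set.singleton_subset_iff]
    exact ExteriorAlgebra.ιMulti_range ℝ m (Set.mem_range_self _)

lemma aux_ιMulti_basis_ne_zero {m : ℕ} (b : Module.Basis (Fin m) ℝ M) :
    ιMulti ℝ m (⇑b) ≠ 0 := by
  classical
  intro h
  let f : ∀ i, M [⋀^Fin i]→ₗ[ℝ] ℝ := fun i => if hi : m = i then hi ▸ b.det else 0
  have h2 := liftAlternating_apply_ιMulti f (⇑b)
  rw [h, map_zero] at h2
  have hfm : f m = b.det := dif_pos rfl
  rw [hfm, Module.Basis.det_self] at h2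
  exact zero_ne_one (α := ℝ) h2

lemma aux_ιMulti_mul {k r : ℕ} (u : Fin k → M) (w : Fin r → M) :
    ιMulti ℝ k u * ιMulti ℝ r w = ιMulti ℝ (k + r) (Fin.append u w) := by
  have hfn : (fun i => ι ℝ (Fin.append u w i)) =
      Fin.append (fun i => ι ℝ (u i)) (fun i => ι ℝ (w i)) := by
    funext j
    refine Fin.addCases (fun j' => ?_) (fun j' => ?_) j <;>
      simp [Fin.append_left, Fin.append_right]
  rw [ιMulti_apply, ιMulti_apply, ιMulti_apply, hfn, List.ofFn_fin_append, List.prod_append]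

lemma aux_map_mem {n : ℕ} (f : M →ₗ[ℝ] N) {x : ExteriorAlgebra ℝ M}
    (hx : x ∈ ⋀[ℝ]^n M) : ExteriorAlgebra.map f x ∈ (⋀[ℝ]^n N : Submodule ℝ _) := by
  rw [← ExteriorAlgebra.ιMulti_span_fixedDegree] at hx
  induction hx using Submodule.span_induction with
  | mem y hy =>
    obtain ⟨v, rfl⟩ := hy
    rw [map_apply_ιMulti]
    exact ExteriorAlgebra.ιMulti_range ℝ n (Set.mem_range_self _)
  | zero => rw [map_zero]; exact Submodule.zero_mem _
  | add y z _ _ hy hz => rw [map_add]; exact Submodule.add_mem _ hy hz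
  | smul c y _ hy => rw [map_smul]; exact Submodule.smul_mem _ _ hy

lemma aux_top_span' {m : ℕ} (b : Module.Basis (Fin m) ℝ M) {x : ExteriorAlgebra ℝ M}
    (hx : x ∈ (⋀[ℝ]^m M : Submodule ℝ (ExteriorAlgebra ℝ M))) :
    ∃ c : ℝ, x = c • ιMulti ℝ m (⇑b) := by
  rw [aux_top_span b, Submodule.mem_span_singleton] at hx
  obtain ⟨c, hc⟩ := hx
  exact ⟨c, hc.symm⟩

end AuxExteriorTop

set_option maxHeartbeats 2000000 in
/-- The canonical top-exterior-power isomorphism for a short exact sequence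
`0 → V₁ →ⁱ V₂ →ᵖ V₃ → 0` of finite-dimensional real vector spaces: there is a linear
equivalence `e : (⋀ᵏ V₁) ⊗ (⋀ʳ V₃) ≃ ⋀^{k+r} V₂` (`k = dim V₁`, `r = dim V₃`) with
`e (ω ⊗ (⋀ʳ p) σ) = (⋀ᵏ i) ω ∧ σ` for all `ω ∈ ⋀ᵏ V₁`, `σ ∈ ⋀ʳ V₂`. Wedge products
and the induced maps on exterior powers are computed inside the exterior algebra. -/
theorem canonical_top_exterior_power_equiv_of_exact
    {V₁ V₂ V₃ : Type*}
    [AddCommGroup V₁] [Module ℝ V₁] [FiniteDimensional ℝ V₁]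
    [AddCommGroup V₂] [Module ℝ V₂] [FiniteDimensional ℝ V₂]
    [AddCommGroup V₃] [Module ℝ V₃] [FiniteDimensional ℝ V₃]
    (i : V₁ →ₗ[ℝ] V₂) (p : V₂ →ₗ[ℝ] V₃)
    (hi : Function.Injective i) (hp : Function.Surjective p)
    (hexact : LinearMap.range i = LinearMap.ker p)
    (k r : ℕ) (hk : k = Module.finrank ℝ V₁) (hr : r = Module.finrank ℝ V₃) :
    ∃ e : ((⋀[ℝ]^k V₁) ⊗[ℝ] (⋀[ℝ]^r V₃)) ≃ₗ[ℝ] (⋀[ℝ]^(k + r) V₂),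
      ∀ (ω : ⋀[ℝ]^k V₁) (σ : ⋀[ℝ]^r V₂) (τ : ⋀[ℝ]^r V₃),
        (τ : ExteriorAlgebra ℝ V₃) = ExteriorAlgebra.map p (σ : ExteriorAlgebra ℝ V₂) →
          (e (ω ⊗ₜ τ) : ExteriorAlgebra ℝ V₂) =
            ExteriorAlgebra.map i (ω : ExteriorAlgebra ℝ V₁) * (σ : ExteriorAlgebra ℝ V₂) := by
  classical
  -- a linear section of p
  obtain ⟨s, hs⟩ := p.exists_rightInverse_of_surjective (LinearMap.range_eq_top.2 hp)
  have hps : ∀ y, p (s y) = y := fun y => congrArg (fun g => g y) hs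
  -- bases
  let b₁ : Module.Basis (Fin k) ℝ V₁ := Module.finBasisOfFinrankEq ℝ V₁ hk.symm
  let b₃ : Module.Basis (Fin r) ℝ V₃ := Module.finBasisOfFinrankEq ℝ V₃ hr.symm
  -- splitting equivalence V₁ × V₃ ≃ V₂
  let φl : (V₁ × V₃) →ₗ[ℝ] V₂ := i ∘ₗ LinearMap.fst ℝ V₁ V₃ + s ∘ₗ LinearMap.snd ℝ V₁ V₃
  have hφl : ∀ x y, φl (x, y) = i x + s y := fun x y => rfl
  have hpi : ∀ x, p (i x) = 0 := by
    intro x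
    have : i x ∈ LinearMap.ker p := hexact ▸ LinearMap.mem_range_self i x
    exact this
  have hφinj : Function.Injective φl := by
    rw [← LinearMap.ker_eq_bot, LinearMap.ker_eq_bot']
    rintro ⟨x, y⟩ hxy
    rw [hφl] at hxy
    have h3 : y = 0 := by
      have := congrArg p hxy
      simpa [hpi, hps] using this
    rw [h3, map_zero, add_zero] at hxy
    have h4 : x = 0 := hi (by simpa using hxy)
    simp [h3, h4]
  have hφsurj : Function.Surjective φl := by
    intro v
    have hker : v - s (p v) ∈ LinearMap.ker p := by simp [hps]
    obtain ⟨x, hx⟩ : v - s (p v) ∈ LinearMap.range i := hexact.symm ▸ hker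
    exact ⟨(x, p v), by rw [hφl, hx]; abel⟩
  let φ : (V₁ × V₃) ≃ₗ[ℝ] V₂ := LinearEquiv.ofBijective φl ⟨hφinj, hφsurj⟩
  let b₂ : Module.Basis (Fin (k + r)) ℝ V₂ := ((b₁.prod b₃).map φ).reindex finSumFinEquiv
  have hb₂ : ⇑b₂ = Fin.append (⇑i ∘ ⇑b₁) (⇑s ∘ ⇑b₃) := by
    funext j
    refine Fin.addCases (fun j' => ?_) (fun j' => ?_) j
    · rw [Fin.append_left, Module.Basis.reindex_apply,
        finSumFinEquiv_symm_apply_castAdd, Module.Basis.map_apply]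
      have : (b₁.prod b₃) (Sum.inl j') = (b₁ j', 0) := by
        ext
        · exact b₁.prod_apply_inl_fst b₃ j'
        · exact b₁.prod_apply_inl_snd b₃ j'
      rw [this]
      show φl (b₁ j', 0) = i (b₁ j')
      rw [hφl, map_zero, add_zero]
    · rw [Fin.append_right, Module.Basis.reindex_apply,
        finSumFinEquiv_symm_apply_natAdd, Module.Basis.map_apply]
      have : (b₁.prod b₃) (Sum.inr j') = (0, b₃ j') := by
        ext
        · exact b₁.prod_apply_inr_fst b₃ j'
        · exact b₁.prod_apply_inr_snd b₃ j'
      rw [this]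
      show φl (0, b₃ j') = s (b₃ j')
      rw [hφl, map_zero, zero_add]
  -- generators
  let g₁ : ExteriorAlgebra ℝ V₁ := ExteriorAlgebra.ιMulti ℝ k ⇑b₁
  let g₃ : ExteriorAlgebra ℝ V₃ := ExteriorAlgebra.ιMulti ℝ r ⇑b₃
  let g₂ : ExteriorAlgebra ℝ V₂ := ExteriorAlgebra.ιMulti ℝ (k + r) ⇑b₂
  let ω₀ : ⋀[ℝ]^k V₁ := ⟨g₁, ExteriorAlgebra.ιMulti_range ℝ k (Set.mem_range_self _)⟩
  let τ₀ : ⋀[ℝ]^r V₃ := ⟨g₃, ExteriorAlgebra.ιMulti_range ℝ r (Set.mem_range_self _)⟩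
  let G : ⋀[ℝ]^(k + r) V₂ := ⟨g₂, ExteriorAlgebra.ιMulti_range ℝ (k + r) (Set.mem_range_self _)⟩
  have hG0 : G ≠ 0 := by
    intro h
    exact aux_ιMulti_basis_ne_zero b₂ (congrArg Subtype.val h)
  -- spanning facts
  have hspan₁ : ∀ a : ⋀[ℝ]^k V₁, ∃ c : ℝ, (a : ExteriorAlgebra ℝ V₁) = c • g₁ :=
    fun a => aux_top_span' b₁ a.2
  have hspan₃ : ∀ a : ⋀[ℝ]^r V₃, ∃ c : ℝ, (a : ExteriorAlgebra ℝ V₃) = c • g₃ :=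
    fun a => aux_top_span' b₃ a.2
  have hspanG : ∀ a : ⋀[ℝ]^(k + r) V₂, ∃ c : ℝ, a = c • G := by
    intro a
    obtain ⟨c, hc⟩ := aux_top_span' b₂ a.2
    exact ⟨c, Subtype.ext hc⟩
  -- the wedge map
  have hmem : ∀ (a : ⋀[ℝ]^k V₁) (t : ⋀[ℝ]^r V₃),
      ExteriorAlgebra.map i (a : ExteriorAlgebra ℝ V₁) *
        ExteriorAlgebra.map s (t : ExteriorAlgebra ℝ V₃) ∈
        (⋀[ℝ]^(k + r) V₂ : Submodule ℝ (ExteriorAlgebra ℝ V₂)) := by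
    intro a t
    have h1 := aux_map_mem i a.2
    have h2 := aux_map_mem s t.2
    have hpow : (⋀[ℝ]^(k + r) V₂ : Submodule ℝ (ExteriorAlgebra ℝ V₂)) =
        (⋀[ℝ]^k V₂ : Submodule ℝ (ExteriorAlgebra ℝ V₂)) * ⋀[ℝ]^r V₂ := pow_add _ k r
    rw [hpow]
    exact Submodule.mul_mem_mul h1 h2
  let B : (⋀[ℝ]^k V₁) →ₗ[ℝ] (⋀[ℝ]^r V₃) →ₗ[ℝ] (⋀[ℝ]^(k + r) V₂) :=
    LinearMap.mk₂ ℝ (fun a t => ⟨_, hmem a t⟩)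
      (fun a a' t => Subtype.ext (by simp [add_mul]))
      (fun c a t => Subtype.ext (by simp [smul_mul_assoc]))
      (fun a t t' => Subtype.ext (by simp [mul_add]))
      (fun c a t => Subtype.ext (by simp [mul_smul_comm]))
  let f : ((⋀[ℝ]^k V₁) ⊗[ℝ] (⋀[ℝ]^r V₃)) →ₗ[ℝ] (⋀[ℝ]^(k + r) V₂) := TensorProduct.lift B
  have hfval : ∀ (a : ⋀[ℝ]^k V₁) (t : ⋀[ℝ]^r V₃),
      (f (a ⊗ₜ t) : ExteriorAlgebra ℝ V₂) =
        ExteriorAlgebra.map i (a : ExteriorAlgebra ℝ V₁) *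
          ExteriorAlgebra.map s (t : ExteriorAlgebra ℝ V₃) := fun a t => rfl
  have hfG : f (ω₀ ⊗ₜ τ₀) = G := by
    refine Subtype.ext ?_
    rw [hfval]
    show ExteriorAlgebra.map i g₁ * ExteriorAlgebra.map s g₃ = g₂
    rw [ExteriorAlgebra.map_apply_ιMulti, ExteriorAlgebra.map_apply_ιMulti, aux_ιMulti_mul]
    show ExteriorAlgebra.ιMulti ℝ (k + r) (Fin.append (⇑i ∘ ⇑b₁) (⇑s ∘ ⇑b₃)) = g₂
    rw [← hb₂]
  -- every element of the domain is a multiple of ω₀ ⊗ τ₀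
  have hdom : ∀ x : ((⋀[ℝ]^k V₁) ⊗[ℝ] (⋀[ℝ]^r V₃)), ∃ c : ℝ, x = c • (ω₀ ⊗ₜ[ℝ] τ₀) := by
    intro x
    induction x using TensorProduct.induction_on with
    | zero => exact ⟨0, by simp⟩
    | tmul a t =>
      obtain ⟨c₁, hc₁⟩ := hspan₁ a
      obtain ⟨c₃, hc₃⟩ := hspan₃ t
      refine ⟨c₁ * c₃, ?_⟩
      have ha : a = c₁ • ω₀ := Subtype.ext hc₁
      have ht : t = c₃ • τ₀ := Subtype.ext hc₃
      rw [ha, ht, TensorProduct.smul_tmul_smul]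
    | add y z hy hz =>
      obtain ⟨c, hc⟩ := hy
      obtain ⟨d, hd⟩ := hz
      exact ⟨c + d, by rw [hc, hd, add_smul]⟩
  have hbij : Function.Bijective f := by
    constructor
    · intro x y hxy
      obtain ⟨c, rfl⟩ := hdom x
      obtain ⟨d, rfl⟩ := hdom y
      rw [map_smul, map_smul, hfG] at hxy
      have : c = d := smul_left_injective ℝ hG0 hxy
      rw [this]
    · intro y
      obtain ⟨c, hc⟩ := hspanG y
      exact ⟨c • (ω₀ ⊗ₜ τ₀), by rw [map_smul, hfG, hc]⟩
  refine ⟨LinearEquiv.ofBijective f hbij, ?_⟩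
  -- the key vanishing lemma
  let q : V₂ →ₗ[ℝ] V₂ := s ∘ₗ p
  let MM : Submodule ℝ (ExteriorAlgebra ℝ V₂) :=
    Submodule.span ℝ {y | ∃ (x : V₁) (c : ExteriorAlgebra ℝ V₂),
      y = ExteriorAlgebra.ι ℝ (i x) * c}
  have hM1 : ∀ (w : V₂), ∀ m ∈ MM, ExteriorAlgebra.ι ℝ w * m ∈ MM := by
    intro w m hm
    induction hm using Submodule.span_induction with
    | mem y hy =>
      obtain ⟨x, c, rfl⟩ := hy
      have h1 : ExteriorAlgebra.ι ℝ w * (ExteriorAlgebra.ι ℝ (i x) * c) =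
          -(ExteriorAlgebra.ι ℝ (i x) * (ExteriorAlgebra.ι ℝ w * c)) := by
        have h2 : ExteriorAlgebra.ι ℝ w * ExteriorAlgebra.ι ℝ (i x) =
            -(ExteriorAlgebra.ι ℝ (i x) * ExteriorAlgebra.ι ℝ w) :=
          eq_neg_of_add_eq_zero_left (ExteriorAlgebra.ι_add_mul_swap w (i x))
        rw [← mul_assoc, h2, neg_mul, mul_assoc]
      rw [h1]
      exact Submodule.neg_mem _ (Submodule.subset_span ⟨x, _, rfl⟩)
    | zero => rw [mul_zero]; exact Submodule.zero_mem _
    | add y z _ _ hy hz => rw [mul_add]; exact Submodule.add_mem _ hy hz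
    | smul c y _ hy => rw [mul_smul_comm]; exact Submodule.smul_mem _ _ hy
  have hqx : ∀ x : V₂, ∃ x₁ : V₁, i x₁ = q x - x := by
    intro x
    have hker : q x - x ∈ LinearMap.ker p := by simp [q, hps]
    have hmem : q x - x ∈ LinearMap.range i := by rw [hexact]; exact hker
    obtain ⟨x₁, hx₁⟩ := hmem
    exact ⟨x₁, hx₁⟩
  have hC : ∀ (n : ℕ) (v : Fin n → V₂),
      ExteriorAlgebra.ιMulti ℝ n (⇑q ∘ v) - ExteriorAlgebra.ιMulti ℝ n v ∈ MM := by
    intro n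
    induction n with
    | zero =>
      intro v
      rw [ExteriorAlgebra.ιMulti_zero_apply, ExteriorAlgebra.ιMulti_zero_apply, sub_self]
      exact Submodule.zero_mem _
    | succ n ih =>
      intro v
      rw [ExteriorAlgebra.ιMulti_succ_apply, ExteriorAlgebra.ιMulti_succ_apply]
      have htail : Matrix.vecTail (⇑q ∘ v) = ⇑q ∘ Matrix.vecTail v := rfl
      rw [htail]
      obtain ⟨x₁, hx₁⟩ := hqx (v 0)
      have hsplit : ExteriorAlgebra.ι ℝ ((⇑q ∘ v) 0) *
            ExteriorAlgebra.ιMulti ℝ n (⇑q ∘ Matrix.vecTail v) -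
            ExteriorAlgebra.ι ℝ (v 0) * ExteriorAlgebra.ιMulti ℝ n (Matrix.vecTail v) =
          ExteriorAlgebra.ι ℝ (q (v 0) - v 0) *
            ExteriorAlgebra.ιMulti ℝ n (⇑q ∘ Matrix.vecTail v) +
          ExteriorAlgebra.ι ℝ (v 0) *
            (ExteriorAlgebra.ιMulti ℝ n (⇑q ∘ Matrix.vecTail v) -
              ExteriorAlgebra.ιMulti ℝ n (Matrix.vecTail v)) := by
        rw [map_sub, sub_mul, mul_sub]
        show ExteriorAlgebra.ι ℝ (q (v 0)) * _ - _ = _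
        abel
      rw [hsplit]
      refine Submodule.add_mem _ ?_ (hM1 _ _ (ih (Matrix.vecTail v)))
      rw [← hx₁]
      exact Submodule.subset_span ⟨x₁, _, rfl⟩
  have hQ : ∀ σ ∈ (⋀[ℝ]^r V₂ : Submodule ℝ (ExteriorAlgebra ℝ V₂)),
      ExteriorAlgebra.map q σ - σ ∈ MM := by
    intro σ hσ
    rw [← ExteriorAlgebra.ιMulti_span_fixedDegree] at hσ
    induction hσ using Submodule.span_induction with
    | mem y hy =>
      obtain ⟨v, rfl⟩ := hy
      rw [ExteriorAlgebra.map_apply_ιMulti]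
      exact hC r (v)
    | zero => simp
    | add y z _ _ hy hz =>
      have : ExteriorAlgebra.map q (y + z) - (y + z) =
          (ExteriorAlgebra.map q y - y) + (ExteriorAlgebra.map q z - z) := by
        rw [map_add]; abel
      rw [this]; exact Submodule.add_mem _ hy hz
    | smul c y _ hy =>
      have : ExteriorAlgebra.map q (c • y) - c • y = c • (ExteriorAlgebra.map q y - y) := by
        rw [map_smul, smul_sub]
      rw [this]; exact Submodule.smul_mem _ _ hy
  have hZ : ∀ m ∈ MM, ExteriorAlgebra.map i g₁ * m = 0 := by
    intro m hm
    have hg₁ι : ∀ x : V₁, ExteriorAlgebra.map i g₁ * ExteriorAlgebra.ι ℝ (i x) = 0 := by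
      intro x
      have h1 : g₁ * ExteriorAlgebra.ι ℝ x ∈ (⋀[ℝ]^(k + 1) V₁ : Submodule ℝ _) := by
        have hpow : (⋀[ℝ]^(k + 1) V₁ : Submodule ℝ (ExteriorAlgebra ℝ V₁)) =
            (⋀[ℝ]^k V₁ : Submodule ℝ (ExteriorAlgebra ℝ V₁)) * ⋀[ℝ]^1 V₁ := pow_add _ k 1
        rw [hpow]
        refine Submodule.mul_mem_mul ω₀.2 ?_
        have hp1 : (⋀[ℝ]^1 V₁ : Submodule ℝ (ExteriorAlgebra ℝ V₁)) =
            LinearMap.range (ExteriorAlgebra.ι ℝ (M := V₁)) := pow_one _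
        rw [hp1]
        exact LinearMap.mem_range_self _ x
      rw [aux_exteriorPower_eq_bot b₁ (Nat.lt_succ_self k), Submodule.mem_bot] at h1
      have : ExteriorAlgebra.map i (g₁ * ExteriorAlgebra.ι ℝ x) = 0 := by rw [h1, map_zero]
      rw [map_mul, ExteriorAlgebra.map_apply_ι] at this
      exact this
    induction hm using Submodule.span_induction with
    | mem y hy =>
      obtain ⟨x, c, rfl⟩ := hy
      rw [← mul_assoc, hg₁ι x, zero_mul]
    | zero => rw [mul_zero]
    | add y z _ _ hy hz => rw [mul_add, hy, hz, add_zero]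
    | smul c y _ hy => rw [mul_smul_comm, hy, smul_zero]
  -- conclude
  intro ω σ τ hτ
  have heq : (LinearEquiv.ofBijective f hbij) (ω ⊗ₜ τ) = f (ω ⊗ₜ τ) := rfl
  rw [heq, hfval, hτ]
  have hcomp : ExteriorAlgebra.map s (ExteriorAlgebra.map p (σ : ExteriorAlgebra ℝ V₂)) =
      ExteriorAlgebra.map q (σ : ExteriorAlgebra ℝ V₂) := by
    have := ExteriorAlgebra.map_comp_map p s
    exact congrArg (fun g => g (σ : ExteriorAlgebra ℝ V₂)) this
  rw [hcomp]
  obtain ⟨c, hc⟩ := hspan₁ ω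
  rw [hc, map_smul, smul_mul_assoc, smul_mul_assoc]
  congr 1
  have h0 := hZ _ (hQ (σ : ExteriorAlgebra ℝ V₂) σ.2)
  rw [mul_sub, sub_eq_zero] at h0
  exact h0
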